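/- Let $R$ be a commutative ring, $M$ an $R$-module such that $Ann_R(M)$ is a nil ideal, and let $N$ be a minimal (nonzero) submodule of $M$. Then either $N^2 = (0)$ (i.e., $(N:M)^2 M = 0$) or $N = eM$ for some idempotent $e \in R$. -/

import Mathlib

open Submodule

section Defs
variable (R : Type*) [CommRing R] {M : Type*} [AddCommGroup M] [Module R M]

/-- `(N : M)`, the colon ideal of a submodule with the whole module. -/
def colonTop (N : Submodule R M) : Ideal R := N.colon ⊤

variable {R}

/-- A prime submodule. -/
def IsPrimeSubmodule (P : Submodule R M) : Prop :=
  P ≠ ⊤ ∧ ∀ (r : R) (m : M), r • m ∈ P → r ∈ colonTop R P ∨ m ∈ P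

/-- The prime spectrum of a module, as a set of submodules. -/
def specSet (R : Type*) [CommRing R] (M : Type*) [AddCommGroup M] [Module R M] :
    Set (Submodule R M) := {P | IsPrimeSubmodule P}

/-- `V(N)`. -/
def Vset (N : Submodule R M) : Set (Submodule R M) :=
  {P | IsPrimeSubmodule P ∧ colonTop R N ≤ colonTop R P}

/-- `V^*(N)`. -/
def VstarSet (N : Submodule R M) : Set (Submodule R M) :=
  {P | IsPrimeSubmodule P ∧ N ≤ P}

/-- The product `NK = (N:M)(K:M)M` of two submodules. -/
def prodSub (N K : Submodule R M) : Submodule R M :=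
  (colonTop R N * colonTop R K) • (⊤ : Submodule R M)

/-- The prime radical of a submodule. -/
def radicalSub (N : Submodule R M) : Submodule R M :=
  sInf {P | IsPrimeSubmodule P ∧ N ≤ P}

/-- Adjacency in the Zariski topology-graph `G(τ_T)`. -/
def ZAdj (T : Set (Submodule R M)) (N L : Submodule R M) : Prop :=
  N ≠ L ∧ N ≠ ⊤ ∧ L ≠ ⊤ ∧ Vset N ∪ Vset L = T ∧ Vset N ≠ T ∧ Vset L ≠ T

/-- Vertices of the Zariski topology-graph `G(τ_T)`. -/
def ZVertex (T : Set (Submodule R M)) (N : Submodule R M) : Prop :=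
  ∃ K, ZAdj T N K

/-- The Zariski topology-graph `G(τ_T)` as a simple graph on its vertex set. -/
def ZGraph (T : Set (Submodule R M)) : SimpleGraph {N : Submodule R M // ZVertex T N} where
  Adj a b := ZAdj T a.1 b.1
  symm := by
    constructor
    rintro a b ⟨h1, h2, h3, h4, h5, h6⟩
    exact ⟨h1.symm, h3, h2, by rwa [Set.union_comm], h6, h5⟩
  loopless := by constructor; rintro a ⟨h1, -⟩; exact h1 rfl

end Defs
section Extra
variable {R : Type*} [CommRing R] {M : Type*} [AddCommGroup M] [Module R M]

/-- Prime submodule of a submodule `W`, internal version (i.e. a prime submodule of the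
module `W`). -/
def IsPrimeIn (W P : Submodule R M) : Prop :=
  P < W ∧ ∀ (r : R) (m : M), m ∈ W → r • m ∈ P → (∀ x ∈ W, r • x ∈ P) ∨ m ∈ P

/-- The prime radical of `N` computed inside the submodule `W`. -/
def radicalIn (W N : Submodule R M) : Submodule R M :=
  sInf {P | IsPrimeIn W P ∧ N ≤ P} ⊓ W

/-- Vertices of the graph `AG(M)^*`. -/
def AGstarVertex (N : Submodule R M) : Prop :=
  N ≠ ⊤ ∧ colonTop R N ≠ Module.annihilator R M ∧
    ∃ K, K ≠ ⊤ ∧ colonTop R K ≠ Module.annihilator R M ∧ prodSub N K = ⊥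

/-- Adjacency in the graph `AG(M)^*`. -/
def AGstarAdj (N L : Submodule R M) : Prop :=
  N ≠ L ∧ AGstarVertex N ∧ AGstarVertex L ∧ prodSub N L = ⊥

/-- The clique number of a graph, valued in `ℕ∞`. -/
noncomputable def cliqueNumE {V : Type*} (G : SimpleGraph V) : ℕ∞ :=
  ⨆ n ∈ {n : ℕ | ∃ s, G.IsNClique n s}, (n : ℕ∞)

end Extra
/-- if `Ann(M)` is nil and `N` is a minimal submodule of `M`, then
`N² = 0` or `N = eM` for some idempotent `e ∈ R`. -/
theorem stmt4 {R : Type*} [CommRing R] {M : Type*} [AddCommGroup M] [Module R M]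
    (hnil : ∀ r ∈ Module.annihilator R M, IsNilpotent r)
    (N : Submodule R M) (hbot : N ≠ ⊥)
    (hmin : ∀ K : Submodule R M, K ≤ N → K = ⊥ ∨ K = N) :
    prodSub N N = ⊥ ∨
      ∃ e : R, IsIdempotentElem e ∧ N = Ideal.span {e} • (⊤ : Submodule R M) := by
  by_cases h : prodSub N N = ⊥
  · exact Or.inl h
  right
  set I : Ideal R := colonTop R N with hI
  -- I • M ≤ N
  have hIM : ∀ r ∈ I, ∀ m : M, r • m ∈ N := by
    intro r hr m
    exact (Submodule.mem_colon (N := N) (S := (⊤ : Set M))).mp hr m trivial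
  -- find a ∈ I, n₀ ∈ N with a • n₀ ≠ 0
  have hex : ∃ a ∈ I, ∃ n ∈ N, a • n ≠ 0 := by
    by_contra hc
    push_neg at hc
    apply h
    rw [prodSub, eq_bot_iff]
    refine Submodule.smul_le.mpr ?_
    intro r hr m _
    refine Submodule.mul_induction_on hr ?_ ?_
    · intro x hx y hy
      rw [mul_smul]
      exact hc x hx (y • m) (hIM y hy m)
    · intro x y hx hy
      rw [add_smul]
      simpa using Submodule.add_mem ⊥ hx hy
  obtain ⟨a, haI, n₀, hn₀N, hano⟩ := hex
  have hn₀ne : n₀ ≠ 0 := by rintro rfl; simp at hano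
  -- span of any nonzero element of N is N
  have hspan : ∀ n ∈ N, n ≠ 0 → Submodule.span R {n} = N := by
    intro n hn hne
    rcases hmin (Submodule.span R {n}) (Submodule.span_le.mpr (by simpa using hn)) with h1 | h1
    · exact absurd (by rw [← Submodule.span_eq_bot.mp h1 n rfl]) hne
    · exact h1
  have han₀N : a • n₀ ∈ N := Submodule.smul_mem N a hn₀N
  have hmem : n₀ ∈ Submodule.span R {a • n₀} := by
    rw [hspan (a • n₀) han₀N hano]; exact hn₀N
  obtain ⟨c, hc⟩ := Submodule.mem_span_singleton.mp hmem
  set b := c * a with hb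
  have hbI : b ∈ I := Ideal.mul_mem_left I c haI
  have hbn₀ : b • n₀ = n₀ := by rw [hb, mul_smul]; exact hc
  -- b acts as identity on N
  have hbid : ∀ n ∈ N, b • n = n := by
    intro n hn
    have : n ∈ Submodule.span R {n₀} := by rw [hspan n₀ hn₀N hn₀ne]; exact hn
    obtain ⟨r, rfl⟩ := Submodule.mem_span_singleton.mp this
    rw [smul_comm, hbn₀]
  -- b * b - b annihilates M
  have hann : b * b - b ∈ Module.annihilator R M := by
    rw [Module.mem_annihilator]
    intro m
    rw [sub_smul, mul_smul, hbid (b • m) (hIM b hbI m), sub_self]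
  -- lift b to an idempotent via R / Ann(M)
  set J := Module.annihilator R M with hJ
  have hker : ∀ x ∈ RingHom.ker (Ideal.Quotient.mk J), IsNilpotent x := by
    intro x hx
    exact hnil x (by rwa [Ideal.mk_ker] at hx)
  have hqidem : IsIdempotentElem (Ideal.Quotient.mk J b) := by
    rw [IsIdempotentElem, ← map_mul, Ideal.Quotient.eq]
    exact hann
  obtain ⟨e, he, hfe⟩ := exists_isIdempotentElem_eq_of_ker_isNilpotent
    (Ideal.Quotient.mk J) hker (Ideal.Quotient.mk J b) ⟨b, rfl⟩ hqidem
  have heb : e - b ∈ J := Ideal.Quotient.eq.mp hfe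
  have hebact : ∀ m : M, e • m = b • m := by
    intro m
    have := Module.mem_annihilator.mp heb m
    rw [sub_smul] at this
    exact sub_eq_zero.mp this
  refine ⟨e, he, ?_⟩
  apply le_antisymm
  · intro n hn
    have : n = e • n := by rw [hebact n, hbid n hn]
    rw [this]
    exact Submodule.smul_mem_smul (Submodule.mem_span_singleton_self e) Submodule.mem_top
  · refine Submodule.smul_le.mpr ?_
    intro r hr m _
    obtain ⟨s, rfl⟩ := Ideal.mem_span_singleton'.mp hr
    rw [mul_smul, hebact m]
    exact Submodule.smul_mem N s (hIM b hbI m)
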